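/- Let c ≠ 0, b > 0, X = ([0,b/c]/∼) × ([0,b]/∼), and Σ = {u ∈ C¹(X, ℝ^d) : u(t+s, x+cs) = u(t,x) for all s} the travelling waves with wave speed c. For a C¹ autonomous Lagrangian L and action S(u) = ∫∫ L(u, u_t, u_x) dx dt, a travelling wave u ∈ Σ is a stationary point of S with respect to all variations if and only if it is a stationary point of the restriction S_Σ with respect to variations through travelling waves; moreover, under the identification u(t,x) = f(x − ct) with f: [0,b]/∼ → ℝ^d, S_Σ(f) = (b/c) ∫₀^b L(f(ξ), −c f_ξ(ξ), f_ξ(ξ)) dξ. -/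

import Mathlib

set_option linter.unusedSectionVars false
set_option maxHeartbeats 1000000

open MeasureTheory intervalIntegral Set Function Metric

noncomputable section

namespace SymCritAux

variable {E : Type*} [NormedAddCommGroup E] [NormedSpace ℝ E] [CompleteSpace E]
variable {F : Type*} [NormedAddCommGroup F] [NormedSpace ℝ F] [CompleteSpace F]

lemma hasDerivAt_comp_curve {Φ : ℝ × ℝ → E} (hΦ : ContDiff ℝ 1 Φ) {g₁ g₂ : ℝ → ℝ}
    {k₁ k₂ : ℝ} {t : ℝ} (h₁ : HasDerivAt g₁ k₁ t) (h₂ : HasDerivAt g₂ k₂ t) :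
    HasDerivAt (fun τ => Φ (g₁ τ, g₂ τ)) (fderiv ℝ Φ (g₁ t, g₂ t) (k₁, k₂)) t := by
  simpa [Function.comp_def] using
    ((hΦ.differentiable one_ne_zero _).hasFDerivAt.comp_hasDerivAt t (h₁.prodMk h₂))

lemma hasDerivAt_pd1 {Φ : ℝ × ℝ → E} (hΦ : ContDiff ℝ 1 Φ) (t x : ℝ) :
    HasDerivAt (fun τ => Φ (τ, x)) (fderiv ℝ Φ (t, x) (1, 0)) t := by
  simpa using hasDerivAt_comp_curve hΦ (hasDerivAt_id t) (hasDerivAt_const t x)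

lemma hasDerivAt_pd2 {Φ : ℝ × ℝ → E} (hΦ : ContDiff ℝ 1 Φ) (t x : ℝ) :
    HasDerivAt (fun y => Φ (t, y)) (fderiv ℝ Φ (t, x) (0, 1)) x := by
  simpa using hasDerivAt_comp_curve hΦ (hasDerivAt_const x t) (hasDerivAt_id x)

lemma cont_pd {Φ : ℝ × ℝ → E} (hΦ : ContDiff ℝ 1 Φ) (v : ℝ × ℝ) :
    Continuous fun p => fderiv ℝ Φ p v :=
  (hΦ.continuous_fderiv one_ne_zero).clm_apply continuous_const

lemma fderiv_pair_eq {Φ : ℝ × ℝ → E} (p : ℝ × ℝ) (k₁ k₂ : ℝ) :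
    fderiv ℝ Φ p (k₁, k₂) = k₁ • fderiv ℝ Φ p (1, 0) + k₂ • fderiv ℝ Φ p (0, 1) := by
  rw [← (fderiv ℝ Φ p).map_smul, ← (fderiv ℝ Φ p).map_smul, ← (fderiv ℝ Φ p).map_add]
  simp [Prod.smul_mk]

lemma intervalIntegral_pair {f : ℝ → E} {g : ℝ → F} {a b : ℝ}
    (hf : IntervalIntegrable f volume a b) (hg : IntervalIntegrable g volume a b) :
    ∫ x in a..b, (f x, g x) = ((∫ x in a..b, f x), ∫ x in a..b, g x) := by
  simp only [intervalIntegral_eq_integral_uIoc]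
  rw [integral_pair hf.def' hg.def']
  split <;> simp

lemma intervalIntegral_swap_of_continuous {G : ℝ → ℝ → E}
    (hG : Continuous fun p : ℝ × ℝ => G p.1 p.2) (a b a' b' : ℝ) :
    ∫ x in a..b, ∫ y in a'..b', G x y = ∫ y in a'..b', ∫ x in a..b, G x y := by
  have hint : ∀ p q r s : ℝ, Integrable (Function.uncurry G)
      ((volume.restrict (Ioc p q)).prod (volume.restrict (Ioc r s))) := by
    intro p q r s
    rw [Measure.prod_restrict]
    exact (hG.continuousOn.integrableOn_compact (isCompact_Icc.prod isCompact_Icc)).mono_set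
      (Set.prod_mono Ioc_subset_Icc_self Ioc_subset_Icc_self)
  have key : ∀ p q r s : ℝ,
      (∫ x in Ioc p q, ∫ y in Ioc r s, G x y) = ∫ y in Ioc r s, ∫ x in Ioc p q, G x y :=
    fun p q r s => integral_integral_swap (hint p q r s)
  have hil : ∀ p q r s : ℝ, Integrable (fun x => ∫ y in Ioc r s, G x y)
      (volume.restrict (Ioc p q)) := fun p q r s => (hint p q r s).integral_prod_left
  have hir : ∀ p q r s : ℝ, Integrable (fun y => ∫ x in Ioc p q, G x y)
      (volume.restrict (Ioc r s)) := fun p q r s => (hint p q r s).integral_prod_right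
  simp only [intervalIntegral]
  rw [integral_sub (hil a b a' b') (hil a b b' a'), integral_sub (hil b a a' b') (hil b a b' a'),
    integral_sub (hir a b a' b') (hir b a a' b'), integral_sub (hir a b b' a') (hir b a b' a'),
    key, key, key, key]
  abel

lemma shift_periodic_integral {g : ℝ → E} {b : ℝ} (hg : Function.Periodic g b) (a : ℝ) :
    ∫ x in (0:ℝ)..b, g (x - a) = ∫ ξ in (0:ℝ)..b, g ξ := by
  rw [intervalIntegral.integral_comp_sub_right g a]
  have := hg.intervalIntegral_add_eq (0 - a) 0
  simpa [sub_eq_add_neg, add_comm, add_left_comm] using this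

lemma periodic_deriv' {g : ℝ → E} {b : ℝ} (hg : ∀ x, g (x + b) = g x) (x : ℝ) :
    deriv g (x + b) = deriv g x := by
  rw [← deriv_comp_add_const]
  congr 1
  funext y
  exact hg y

variable {G : Type*} [NormedAddCommGroup G] [NormedSpace ℝ G]

lemma hasDerivAt_parametric_double (Λ : G → ℝ) (hΛ : ContDiff ℝ 1 Λ) (T b : ℝ)
    (V W : ℝ × ℝ → G) (hV : Continuous V) (hW : Continuous W) :
    HasDerivAt (fun ε : ℝ => ∫ t in (0:ℝ)..T, ∫ x in (0:ℝ)..b, Λ (V (t, x) + ε • W (t, x)))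
      (∫ t in (0:ℝ)..T, ∫ x in (0:ℝ)..b, fderiv ℝ Λ (V (t, x)) (W (t, x))) 0 := by
  set Φ : ℝ → ℝ × ℝ → ℝ := fun ε p => Λ (V p + ε • W p) with hΦdef
  set Φ' : ℝ → ℝ × ℝ → ℝ := fun ε p => fderiv ℝ Λ (V p + ε • W p) (W p) with hΦ'def
  have hin : Continuous fun q : ℝ × (ℝ × ℝ) => V q.2 + q.1 • W q.2 :=
    (hV.comp continuous_snd).add (continuous_fst.smul (hW.comp continuous_snd))
  have hΦc : Continuous fun q : ℝ × (ℝ × ℝ) => Φ q.1 q.2 := hΛ.continuous.comp hin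
  have hΦ'c : Continuous fun q : ℝ × (ℝ × ℝ) => Φ' q.1 q.2 :=
    (((hΛ.continuous_fderiv one_ne_zero).comp hin)).clm_apply (hW.comp continuous_snd)
  have hd : ∀ (p : ℝ × ℝ) (ε : ℝ), HasDerivAt (fun ε => Φ ε p) (Φ' ε p) ε := by
    intro p ε
    have h1 : HasDerivAt (fun ε : ℝ => V p + ε • W p) (W p) ε := by
      simpa using ((hasDerivAt_id ε).smul_const (W p)).const_add (V p)
    simpa [Function.comp_def] using
      ((hΛ.differentiable one_ne_zero _).hasFDerivAt.comp_hasDerivAt ε h1)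
  obtain ⟨M, hM⟩ := (((isCompact_Icc (a := (-1:ℝ)) (b := 1)).prod
      (isCompact_uIcc (a := (0:ℝ)) (b := T) |>.prod
        (isCompact_uIcc (a := (0:ℝ)) (b := b))))).exists_bound_of_continuousOn
      hΦ'c.continuousOn
  have hball : ∀ ε₀ ∈ ball (0:ℝ) 1, ∀ ε ∈ ball ε₀ (1 - ‖ε₀‖), ε ∈ Icc (-1:ℝ) 1 := by
    intro ε₀ h₀ ε hε
    rw [mem_ball, dist_eq_norm] at hε
    have : ‖ε‖ < 1 := by
      calc ‖ε‖ = ‖ε - ε₀ + ε₀‖ := by congr 1; ring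
      _ ≤ ‖ε - ε₀‖ + ‖ε₀‖ := norm_add_le _ _
      _ < 1 := by linarith
    rw [Real.norm_eq_abs] at this
    have h2 := abs_le.mp this.le
    exact ⟨h2.1, h2.2⟩
  have hMbd : ∀ ε ∈ Icc (-1:ℝ) 1, ∀ t ∈ uIcc (0:ℝ) T, ∀ x ∈ uIcc (0:ℝ) b,
      ‖Φ' ε (t, x)‖ ≤ M := by
    intro ε hε t ht x hx
    exact hM (ε, (t, x)) ⟨hε, ht, hx⟩
  have inner : ∀ t ∈ uIcc (0:ℝ) T, ∀ ε₀ ∈ ball (0:ℝ) 1,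
      HasDerivAt (fun ε => ∫ x in (0:ℝ)..b, Φ ε (t, x))
        (∫ x in (0:ℝ)..b, Φ' ε₀ (t, x)) ε₀ := by
    intro t ht ε₀ hε₀
    have hεpos : 0 < 1 - ‖ε₀‖ := by
      rw [mem_ball, dist_zero_right] at hε₀; linarith
    refine (intervalIntegral.hasDerivAt_integral_of_dominated_loc_of_deriv_le (ball_mem_nhds ε₀ hεpos)
      (F := fun ε x => Φ ε (t, x)) (F' := fun ε x => Φ' ε (t, x))
      (bound := fun _ => M) ?_ ?_ ?_ ?_ ?_ ?_).2
    · filter_upwards with ε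
      exact (hΦc.comp (continuous_const.prodMk
        (continuous_const.prodMk continuous_id))).aestronglyMeasurable
    · exact ((hΦc.comp (continuous_const.prodMk
        (continuous_const.prodMk continuous_id))).intervalIntegrable _ _)
    · exact (hΦ'c.comp (continuous_const.prodMk
        (continuous_const.prodMk continuous_id))).aestronglyMeasurable
    · filter_upwards with x hx
      intro ε hε
      exact hMbd ε (hball ε₀ hε₀ ε hε) t ht x (uIoc_subset_uIcc hx)
    · exact intervalIntegrable_const
    · filter_upwards with x _
      intro ε _
      exact hd (t, x) ε
  have cont_param : ∀ ε : ℝ, Continuous fun t => ∫ x in (0:ℝ)..b, Φ ε (t, x) := by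
    intro ε
    exact intervalIntegral.continuous_parametric_intervalIntegral_of_continuous'
      (f := fun t x => Φ ε (t, x))
      (hΦc.comp (continuous_const.prodMk continuous_id)) 0 b
  have cont_param' : Continuous fun t => ∫ x in (0:ℝ)..b, Φ' 0 (t, x) :=
    intervalIntegral.continuous_parametric_intervalIntegral_of_continuous'
      (f := fun t x => Φ' 0 (t, x))
      (hΦ'c.comp (continuous_const.prodMk continuous_id)) 0 b
  have main := (intervalIntegral.hasDerivAt_integral_of_dominated_loc_of_deriv_le
      (ball_mem_nhds _ one_pos) (x₀ := (0:ℝ)) (a := (0:ℝ)) (b := T) (μ := volume)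
      (F := fun ε t => ∫ x in (0:ℝ)..b, Φ ε (t, x))
      (F' := fun ε t => ∫ x in (0:ℝ)..b, Φ' ε (t, x))
      (bound := fun _ => M * |b|)
      (by filter_upwards with ε; exact (cont_param ε).aestronglyMeasurable)
      ((cont_param 0).intervalIntegrable _ _)
      cont_param'.aestronglyMeasurable
      ?_ intervalIntegrable_const ?_).2
  · have h0 : ∀ p : ℝ × ℝ, Φ' 0 p = fderiv ℝ Λ (V p) (W p) := by
      intro p; simp [hΦ'def]
    simpa [h0] using main
  · filter_upwards with t ht
    intro ε hε
    have : ∀ x ∈ Set.uIoc (0:ℝ) b, ‖Φ' ε (t, x)‖ ≤ M := by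
      intro x hx
      refine hMbd ε ?_ t (uIoc_subset_uIcc ht) x (uIoc_subset_uIcc hx)
      exact hball 0 (by simp) ε (by simpa using hε)
    calc ‖∫ x in (0:ℝ)..b, Φ' ε (t, x)‖ ≤ M * |b - 0| :=
        intervalIntegral.norm_integral_le_of_norm_le_const this
    _ = M * |b| := by simp
  · filter_upwards with t ht
    intro ε hε
    exact inner t (uIoc_subset_uIcc ht) ε hε

end SymCritAux

open SymCritAux


/-- The action functional `S(w) = ∫₀^T ∫₀^b L(w, w_t, w_x) dx dt`. -/
def Sact {d : ℕ} (L : (Fin d → ℝ) → (Fin d → ℝ) → (Fin d → ℝ) → ℝ)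
    (T b : ℝ) (w : ℝ → ℝ → (Fin d → ℝ)) : ℝ :=
  ∫ t in (0:ℝ)..T, ∫ x in (0:ℝ)..b,
    L (w t x) (deriv (fun τ => w τ x) t) (deriv (w t) x)



lemma sact_hasDerivAt {d : ℕ} (L : (Fin d → ℝ) → (Fin d → ℝ) → (Fin d → ℝ) → ℝ)
    (hL : ContDiff ℝ 1
      (fun q : (Fin d → ℝ) × (Fin d → ℝ) × (Fin d → ℝ) => L q.1 q.2.1 q.2.2))
    (T b : ℝ) (u δ : ℝ → ℝ → (Fin d → ℝ))
    (hu : ContDiff ℝ 1 (fun p : ℝ × ℝ => u p.1 p.2))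
    (hδ : ContDiff ℝ 1 (fun p : ℝ × ℝ => δ p.1 p.2)) :
    HasDerivAt (fun ε : ℝ => Sact L T b (fun t x => u t x + ε • δ t x))
      (∫ t in (0:ℝ)..T, ∫ x in (0:ℝ)..b,
        fderiv ℝ (fun q : (Fin d → ℝ) × (Fin d → ℝ) × (Fin d → ℝ) => L q.1 q.2.1 q.2.2)
          (u t x, fderiv ℝ (fun p : ℝ × ℝ => u p.1 p.2) (t, x) (1, 0),
                  fderiv ℝ (fun p : ℝ × ℝ => u p.1 p.2) (t, x) (0, 1))
          (δ t x, fderiv ℝ (fun p : ℝ × ℝ => δ p.1 p.2) (t, x) (1, 0),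
                  fderiv ℝ (fun p : ℝ × ℝ => δ p.1 p.2) (t, x) (0, 1))) 0 := by
  set Λ : (Fin d → ℝ) × (Fin d → ℝ) × (Fin d → ℝ) → ℝ :=
    fun q => L q.1 q.2.1 q.2.2 with hΛdef
  set V : ℝ × ℝ → (Fin d → ℝ) × (Fin d → ℝ) × (Fin d → ℝ) :=
    fun p => (u p.1 p.2, fderiv ℝ (fun p : ℝ × ℝ => u p.1 p.2) p (1, 0),
      fderiv ℝ (fun p : ℝ × ℝ => u p.1 p.2) p (0, 1)) with hVdef
  set W : ℝ × ℝ → (Fin d → ℝ) × (Fin d → ℝ) × (Fin d → ℝ) :=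
    fun p => (δ p.1 p.2, fderiv ℝ (fun p : ℝ × ℝ => δ p.1 p.2) p (1, 0),
      fderiv ℝ (fun p : ℝ × ℝ => δ p.1 p.2) p (0, 1)) with hWdef
  have hVc : Continuous V := hu.continuous.prodMk ((cont_pd hu _).prodMk (cont_pd hu _))
  have hWc : Continuous W := hδ.continuous.prodMk ((cont_pd hδ _).prodMk (cont_pd hδ _))
  have key := hasDerivAt_parametric_double Λ hL T b V W hVc hWc
  have heq : (fun ε : ℝ => Sact L T b (fun t x => u t x + ε • δ t x))
      = fun ε : ℝ => ∫ t in (0:ℝ)..T, ∫ x in (0:ℝ)..b, Λ (V (t, x) + ε • W (t, x)) := by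
    funext ε
    unfold Sact
    apply intervalIntegral.integral_congr
    intro t _
    apply intervalIntegral.integral_congr
    intro x _
    have hder1 : deriv (fun τ => u τ x + ε • δ τ x) t
        = fderiv ℝ (fun p : ℝ × ℝ => u p.1 p.2) (t, x) (1, 0)
          + ε • fderiv ℝ (fun p : ℝ × ℝ => δ p.1 p.2) (t, x) (1, 0) :=
      ((hasDerivAt_pd1 hu t x).add (HasDerivAt.const_smul ε (hasDerivAt_pd1 hδ t x))).deriv
    have hder2 : deriv (fun y => u t y + ε • δ t y) x
        = fderiv ℝ (fun p : ℝ × ℝ => u p.1 p.2) (t, x) (0, 1)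
          + ε • fderiv ℝ (fun p : ℝ × ℝ => δ p.1 p.2) (t, x) (0, 1) :=
      ((hasDerivAt_pd2 hu t x).add (HasDerivAt.const_smul ε (hasDerivAt_pd2 hδ t x))).deriv
    show L _ (deriv (fun τ => u τ x + ε • δ τ x) t) (deriv (fun y => u t y + ε • δ t y) x) = _
    rw [hder1, hder2]
    rfl
  rw [heq]
  exact key

lemma pd1_periodic_x {E : Type*} [NormedAddCommGroup E] [NormedSpace ℝ E] [CompleteSpace E]
    {δ : ℝ → ℝ → E} (hδ : ContDiff ℝ 1 (fun p : ℝ × ℝ => δ p.1 p.2)) {b : ℝ}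
    (hδpx : ∀ t x, δ t (x + b) = δ t x) (t x : ℝ) :
    fderiv ℝ (fun p : ℝ × ℝ => δ p.1 p.2) (t, x + b) (1, 0)
      = fderiv ℝ (fun p : ℝ × ℝ => δ p.1 p.2) (t, x) (1, 0) := by
  refine (hasDerivAt_pd1 hδ t (x + b)).unique ?_
  have h2 := hasDerivAt_pd1 hδ t x
  have heqf : (fun τ => δ τ x) = fun τ => δ τ (x + b) := funext fun τ => (hδpx τ x).symm
  rw [heqf] at h2
  exact h2

lemma pd2_periodic_x {E : Type*} [NormedAddCommGroup E] [NormedSpace ℝ E] [CompleteSpace E]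
    {δ : ℝ → ℝ → E} (hδ : ContDiff ℝ 1 (fun p : ℝ × ℝ => δ p.1 p.2)) {b : ℝ}
    (hδpx : ∀ t x, δ t (x + b) = δ t x) (t x : ℝ) :
    fderiv ℝ (fun p : ℝ × ℝ => δ p.1 p.2) (t, x + b) (0, 1)
      = fderiv ℝ (fun p : ℝ × ℝ => δ p.1 p.2) (t, x) (0, 1) := by
  rw [← (hasDerivAt_pd2 hδ t (x + b)).deriv, ← (hasDerivAt_pd2 hδ t x).deriv]
  exact periodic_deriv' (g := fun y => δ t y) (fun y => hδpx t y) x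

lemma key_swap {E : Type*} [NormedAddCommGroup E] [NormedSpace ℝ E] [CompleteSpace E]
    {c T b : ℝ} (hcT : c * T = b)
    (D : ℝ → ((E × E × E) →L[ℝ] ℝ)) (hDc : Continuous D) (hDper : ∀ ξ, D (ξ + b) = D ξ)
    (δ : ℝ → ℝ → E) (hδ : ContDiff ℝ 1 (fun p : ℝ × ℝ => δ p.1 p.2))
    (hδpt : ∀ t x, δ (t + T) x = δ t x) (hδpx : ∀ t x, δ t (x + b) = δ t x) :
    (∫ t in (0:ℝ)..T, ∫ x in (0:ℝ)..b,
        D (x - c * t) (δ t x, fderiv ℝ (fun p : ℝ × ℝ => δ p.1 p.2) (t, x) (1, 0),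
          fderiv ℝ (fun p : ℝ × ℝ => δ p.1 p.2) (t, x) (0, 1)))
      = ∫ ξ in (0:ℝ)..b, D ξ
          ((∫ t in (0:ℝ)..T, δ t (ξ + c * t)),
           (-c) • ∫ t in (0:ℝ)..T, fderiv ℝ (fun p : ℝ × ℝ => δ p.1 p.2) (t, ξ + c * t) (0, 1),
           ∫ t in (0:ℝ)..T, fderiv ℝ (fun p : ℝ × ℝ => δ p.1 p.2) (t, ξ + c * t) (0, 1)) := by
  have hδc : Continuous fun p : ℝ × ℝ => δ p.1 p.2 := hδ.continuous
  have hPc : Continuous fun p : ℝ × ℝ =>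
      fderiv ℝ (fun p : ℝ × ℝ => δ p.1 p.2) p (1, 0) := cont_pd hδ _
  have hQc : Continuous fun p : ℝ × ℝ =>
      fderiv ℝ (fun p : ℝ × ℝ => δ p.1 p.2) p (0, 1) := cont_pd hδ _
  -- step 1 : change of variables in the inner integral
  have step1 : ∀ t : ℝ, (∫ x in (0:ℝ)..b,
      D (x - c * t) (δ t x, fderiv ℝ (fun p : ℝ × ℝ => δ p.1 p.2) (t, x) (1, 0),
        fderiv ℝ (fun p : ℝ × ℝ => δ p.1 p.2) (t, x) (0, 1)))
      = ∫ ξ in (0:ℝ)..b, D ξ (δ t (ξ + c * t),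
          fderiv ℝ (fun p : ℝ × ℝ => δ p.1 p.2) (t, ξ + c * t) (1, 0),
          fderiv ℝ (fun p : ℝ × ℝ => δ p.1 p.2) (t, ξ + c * t) (0, 1)) := by
    intro t
    have hKper : Function.Periodic (fun ξ => D ξ (δ t (ξ + c * t),
        fderiv ℝ (fun p : ℝ × ℝ => δ p.1 p.2) (t, ξ + c * t) (1, 0),
        fderiv ℝ (fun p : ℝ × ℝ => δ p.1 p.2) (t, ξ + c * t) (0, 1))) b := by
      intro ξ
      have e : ξ + b + c * t = (ξ + c * t) + b := by ring
      simp only [e, hDper, hδpx, pd1_periodic_x hδ hδpx, pd2_periodic_x hδ hδpx]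
    have hpt : ∀ x : ℝ, D (x - c * t) (δ t x,
        fderiv ℝ (fun p : ℝ × ℝ => δ p.1 p.2) (t, x) (1, 0),
        fderiv ℝ (fun p : ℝ × ℝ => δ p.1 p.2) (t, x) (0, 1))
        = (fun ξ => D ξ (δ t (ξ + c * t),
            fderiv ℝ (fun p : ℝ × ℝ => δ p.1 p.2) (t, ξ + c * t) (1, 0),
            fderiv ℝ (fun p : ℝ × ℝ => δ p.1 p.2) (t, ξ + c * t) (0, 1))) (x - c * t) := by
      intro x
      have e : x - c * t + c * t = x := by ring
      simp only [e]
    rw [intervalIntegral.integral_congr (fun x _ => hpt x)]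
    exact shift_periodic_integral hKper (c * t)
  rw [intervalIntegral.integral_congr (fun t _ => step1 t)]
  -- step 2 : Fubini
  have hmap : Continuous fun q : ℝ × ℝ => ((q.1, q.2 + c * q.1) : ℝ × ℝ) :=
    continuous_fst.prodMk (continuous_snd.add (continuous_const.mul continuous_fst))
  have hKc : Continuous fun q : ℝ × ℝ => D q.2 (δ q.1 (q.2 + c * q.1),
      fderiv ℝ (fun p : ℝ × ℝ => δ p.1 p.2) (q.1, q.2 + c * q.1) (1, 0),
      fderiv ℝ (fun p : ℝ × ℝ => δ p.1 p.2) (q.1, q.2 + c * q.1) (0, 1)) :=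
    (hDc.comp continuous_snd).clm_apply
      ((hδc.comp hmap).prodMk ((hPc.comp hmap).prodMk (hQc.comp hmap)))
  rw [intervalIntegral_swap_of_continuous hKc 0 T 0 b]
  -- step 3 : fixed ξ
  apply intervalIntegral.integral_congr
  intro ξ _
  beta_reduce
  have hmapt : Continuous fun t : ℝ => ((t, ξ + c * t) : ℝ × ℝ) :=
    continuous_id.prodMk (continuous_const.add (continuous_const.mul continuous_id))
  have hδt_c : Continuous fun t => δ t (ξ + c * t) := hδc.comp hmapt
  have hP_c : Continuous fun t =>
      fderiv ℝ (fun p : ℝ × ℝ => δ p.1 p.2) (t, ξ + c * t) (1, 0) := hPc.comp hmapt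
  have hQ_c : Continuous fun t =>
      fderiv ℝ (fun p : ℝ × ℝ => δ p.1 p.2) (t, ξ + c * t) (0, 1) := hQc.comp hmapt
  have htrip : Continuous fun t : ℝ => ((δ t (ξ + c * t),
      fderiv ℝ (fun p : ℝ × ℝ => δ p.1 p.2) (t, ξ + c * t) (1, 0),
      fderiv ℝ (fun p : ℝ × ℝ => δ p.1 p.2) (t, ξ + c * t) (0, 1)) : E × E × E) :=
    hδt_c.prodMk (hP_c.prodMk hQ_c)
  rw [ContinuousLinearMap.intervalIntegral_comp_comm (D ξ) (htrip.intervalIntegrable _ _),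
    intervalIntegral_pair (hδt_c.intervalIntegrable _ _)
      ((hP_c.prodMk hQ_c).intervalIntegrable _ _),
    intervalIntegral_pair (hP_c.intervalIntegrable _ _) (hQ_c.intervalIntegrable _ _)]
  -- step 4 : the t-integral of the time-derivative component
  have hI2 : (∫ t in (0:ℝ)..T, fderiv ℝ (fun p : ℝ × ℝ => δ p.1 p.2) (t, ξ + c * t) (1, 0))
      = (-c) • ∫ t in (0:ℝ)..T,
          fderiv ℝ (fun p : ℝ × ℝ => δ p.1 p.2) (t, ξ + c * t) (0, 1) := by
    have hφ : ∀ t : ℝ, HasDerivAt (fun t => δ t (ξ + c * t))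
        (fderiv ℝ (fun p : ℝ × ℝ => δ p.1 p.2) (t, ξ + c * t) (1, 0)
          + c • fderiv ℝ (fun p : ℝ × ℝ => δ p.1 p.2) (t, ξ + c * t) (0, 1)) t := by
      intro t
      have h0 := hasDerivAt_comp_curve hδ (hasDerivAt_id t)
        (((hasDerivAt_id t).const_mul c).const_add ξ)
      rw [fderiv_pair_eq] at h0
      simpa using h0
    have hsum := intervalIntegral.integral_eq_sub_of_hasDerivAt
      (a := (0:ℝ)) (b := T) (f := fun t => δ t (ξ + c * t)) (f' := fun t =>
        fderiv ℝ (fun p : ℝ × ℝ => δ p.1 p.2) (t, ξ + c * t) (1, 0)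
          + c • fderiv ℝ (fun p : ℝ × ℝ => δ p.1 p.2) (t, ξ + c * t) (0, 1))
      (fun t _ => hφ t) ((hP_c.add (hQ_c.const_smul c)).intervalIntegrable _ _)
    rw [intervalIntegral.integral_add
      (f := fun t => fderiv ℝ (fun p : ℝ × ℝ => δ p.1 p.2) (t, ξ + c * t) (1, 0))
      (g := fun t => c • fderiv ℝ (fun p : ℝ × ℝ => δ p.1 p.2) (t, ξ + c * t) (0, 1))
      (hP_c.intervalIntegrable _ _)
      ((hQ_c.const_smul c).intervalIntegrable _ _),
      intervalIntegral.integral_smul] at hsum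
    beta_reduce at hsum
    have hb0 : δ T (ξ + c * T) = δ 0 (ξ + c * 0) := by
      calc δ T (ξ + c * T) = δ T (ξ + b) := by rw [hcT]
      _ = δ T ξ := hδpx T ξ
      _ = δ (0 + T) ξ := by rw [zero_add]
      _ = δ 0 ξ := hδpt 0 ξ
      _ = δ 0 (ξ + c * 0) := by rw [mul_zero, add_zero]
    rw [hb0, sub_self] at hsum
    have h2 := eq_neg_of_add_eq_zero_left hsum
    rw [h2, neg_smul]
  rw [hI2]

/-- Palais' principle of symmetric criticality for travelling waves: a travelling
wave `u ∈ Σ` is a stationary point of `S` with respect to all (periodic C¹)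
variations iff it is stationary with respect to variations through travelling
waves; moreover, with `u(t,x) = f(x − ct)`,
`S_Σ(f) = (b/c) ∫₀^b L(f, −c f_ξ, f_ξ) dξ`. -/
theorem symmetric_criticality_travelling_waves
    {d : ℕ} (c b : ℝ) (hc : c ≠ 0) (hb : 0 < b)
    (L : (Fin d → ℝ) → (Fin d → ℝ) → (Fin d → ℝ) → ℝ)
    (hL : ContDiff ℝ 1
      (fun q : (Fin d → ℝ) × (Fin d → ℝ) × (Fin d → ℝ) => L q.1 q.2.1 q.2.2))
    (u : ℝ → ℝ → (Fin d → ℝ))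
    (hu : ContDiff ℝ 1 (fun p : ℝ × ℝ => u p.1 p.2))
    (huper_t : ∀ t x, u (t + b / c) x = u t x)
    (huper_x : ∀ t x, u t (x + b) = u t x)
    (hTW : ∀ s t x, u (t + s) (x + c * s) = u t x)
    (f : ℝ → (Fin d → ℝ)) (hf : ContDiff ℝ 1 f)
    (hfper : ∀ ξ, f (ξ + b) = f ξ)
    (huf : ∀ t x, u t x = f (x - c * t)) :
    ((∀ δ : ℝ → ℝ → (Fin d → ℝ),
        ContDiff ℝ 1 (fun p : ℝ × ℝ => δ p.1 p.2) →
        (∀ t x, δ (t + b / c) x = δ t x) →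
        (∀ t x, δ t (x + b) = δ t x) →
        deriv (fun ε : ℝ =>
          Sact L (b / c) b (fun t x => u t x + ε • δ t x)) 0 = 0)
      ↔
      (∀ δ : ℝ → ℝ → (Fin d → ℝ),
        ContDiff ℝ 1 (fun p : ℝ × ℝ => δ p.1 p.2) →
        (∀ t x, δ (t + b / c) x = δ t x) →
        (∀ t x, δ t (x + b) = δ t x) →
        (∀ s t x, δ (t + s) (x + c * s) = δ t x) →
        deriv (fun ε : ℝ =>
          Sact L (b / c) b (fun t x => u t x + ε • δ t x)) 0 = 0))
    ∧ Sact L (b / c) b u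
        = (b / c) * ∫ ξ in (0:ℝ)..b, L (f ξ) ((-c) • deriv f ξ) (deriv f ξ) := by
  set T : ℝ := b / c with hTdef
  have hT : T ≠ 0 := div_ne_zero (ne_of_gt hb) hc
  have hcT : c * T = b := by rw [hTdef]; field_simp
  set Λ : (Fin d → ℝ) × (Fin d → ℝ) × (Fin d → ℝ) → ℝ :=
    fun q => L q.1 q.2.1 q.2.2 with hΛdef
  set f' : ℝ → (Fin d → ℝ) := deriv f with hf'def
  have hfd : Differentiable ℝ f := hf.differentiable one_ne_zero
  have hf'c : Continuous f' := (contDiff_one_iff_deriv.mp hf).2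
  have hf'per : ∀ ξ, f' (ξ + b) = f' ξ := fun ξ => periodic_deriv' hfper ξ
  set v₀ : ℝ → (Fin d → ℝ) × (Fin d → ℝ) × (Fin d → ℝ) :=
    fun ξ => (f ξ, (-c) • f' ξ, f' ξ) with hv₀def
  have hv₀c : Continuous v₀ :=
    (hf.continuous).prodMk ((hf'c.const_smul (-c)).prodMk hf'c)
  have hv₀per : ∀ ξ, v₀ (ξ + b) = v₀ ξ := by
    intro ξ; simp only [hv₀def, hfper, hf'per]
  set D : ℝ → ((Fin d → ℝ) × (Fin d → ℝ) × (Fin d → ℝ)) →L[ℝ] ℝ :=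
    fun ξ => fderiv ℝ Λ (v₀ ξ) with hDdef
  have hDc : Continuous D := (hL.continuous_fderiv one_ne_zero).comp hv₀c
  have hDper : ∀ ξ, D (ξ + b) = D ξ := by
    intro ξ; simp only [hDdef, hv₀per]
  -- identification of the partial derivatives of u
  have hUt : ∀ t x : ℝ, fderiv ℝ (fun p : ℝ × ℝ => u p.1 p.2) (t, x) (1, 0)
      = (-c) • f' (x - c * t) := by
    intro t x
    refine (hasDerivAt_pd1 hu t x).unique ?_
    have hg : HasDerivAt (fun τ : ℝ => x - c * τ) (-c) t := by
      exact ((hasDerivAt_const t x).sub ((hasDerivAt_id t).const_mul c)).congr_deriv (by ring)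
    have h2 := HasDerivAt.scomp t ((hfd (x - c * t)).hasDerivAt) hg
    have heqf : (fun τ : ℝ => u τ x) = f ∘ fun τ : ℝ => x - c * τ :=
      funext fun τ => huf τ x
    rw [heqf]
    simpa using h2
  have hUx : ∀ t x : ℝ, fderiv ℝ (fun p : ℝ × ℝ => u p.1 p.2) (t, x) (0, 1)
      = f' (x - c * t) := by
    intro t x
    refine (hasDerivAt_pd2 hu t x).unique ?_
    have hg : HasDerivAt (fun y : ℝ => y - c * t) 1 x := by
      simpa using (hasDerivAt_id x).sub_const (c * t)
    have h2 := HasDerivAt.scomp x ((hfd (x - c * t)).hasDerivAt) hg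
    have heqf : (fun y : ℝ => u t y) = f ∘ fun y : ℝ => y - c * t :=
      funext fun y => huf t y
    rw [heqf]
    simpa using h2
  have hVeq : ∀ t x : ℝ,
      ((u t x, fderiv ℝ (fun p : ℝ × ℝ => u p.1 p.2) (t, x) (1, 0),
        fderiv ℝ (fun p : ℝ × ℝ => u p.1 p.2) (t, x) (0, 1))
        : (Fin d → ℝ) × (Fin d → ℝ) × (Fin d → ℝ)) = v₀ (x - c * t) := by
    intro t x
    rw [huf t x, hUt t x, hUx t x]
  -- Part 2
  have part2 : Sact L T b u = T * ∫ ξ in (0:ℝ)..b, L (f ξ) ((-c) • f' ξ) (f' ξ) := by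
    have hper : Function.Periodic (fun ξ => L (f ξ) ((-c) • f' ξ) (f' ξ)) b := fun ξ => by
      simp only [hfper, hf'per]
    have hinner : ∀ t : ℝ,
        (∫ x in (0:ℝ)..b, L (u t x) (deriv (fun τ => u τ x) t) (deriv (u t) x))
          = ∫ ξ in (0:ℝ)..b, L (f ξ) ((-c) • f' ξ) (f' ξ) := by
      intro t
      have hpt : ∀ x : ℝ, L (u t x) (deriv (fun τ => u τ x) t) (deriv (u t) x)
          = (fun ξ => L (f ξ) ((-c) • f' ξ) (f' ξ)) (x - c * t) := by
        intro x
        rw [(hasDerivAt_pd1 hu t x).deriv, (hasDerivAt_pd2 hu t x).deriv,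
          hUt t x, hUx t x, huf t x]
      rw [intervalIntegral.integral_congr (fun x _ => hpt x)]
      exact shift_periodic_integral hper (c * t)
    unfold Sact
    rw [intervalIntegral.integral_congr (fun t _ => hinner t)]
    rw [intervalIntegral.integral_const]
    simp [smul_eq_mul]
  constructor
  · constructor
    · intro hall δ h1 h2 h3 _
      exact hall δ h1 h2 h3
    · intro hR δ hδ hδpt hδpx
      have hδc : Continuous fun p : ℝ × ℝ => δ p.1 p.2 := hδ.continuous
      have hQc : Continuous fun p : ℝ × ℝ =>
          fderiv ℝ (fun p : ℝ × ℝ => δ p.1 p.2) p (0, 1) := cont_pd hδ _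
      set h : ℝ → (Fin d → ℝ) := fun ξ => ∫ t in (0:ℝ)..T, δ t (ξ + c * t) with hhdef
      set h1 : ℝ → (Fin d → ℝ) := fun ξ => ∫ t in (0:ℝ)..T,
        fderiv ℝ (fun p : ℝ × ℝ => δ p.1 p.2) (t, ξ + c * t) (0, 1) with hh1def
      have hmapξt : Continuous fun q : ℝ × ℝ => ((q.2, q.1 + c * q.2) : ℝ × ℝ) :=
        continuous_snd.prodMk (continuous_fst.add (continuous_const.mul continuous_snd))
      have hmaptfix : ∀ ξ : ℝ, Continuous fun t : ℝ => ((t, ξ + c * t) : ℝ × ℝ) :=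
        fun ξ => continuous_id.prodMk (continuous_const.add
          (continuous_const.mul continuous_id))
      have hh1c : Continuous h1 := by
        apply intervalIntegral.continuous_parametric_intervalIntegral_of_continuous'
          (f := fun ξ t => fderiv ℝ (fun p : ℝ × ℝ => δ p.1 p.2) (t, ξ + c * t) (0, 1))
        exact hQc.comp hmapξt
      have hh' : ∀ ξ₀ : ℝ, HasDerivAt h (h1 ξ₀) ξ₀ := by
        intro ξ₀
        obtain ⟨M, hM⟩ := ((isCompact_uIcc (a := (0:ℝ)) (b := T)).prod
          (isCompact_Icc (a := ξ₀ - 1) (b := ξ₀ + 1))).exists_bound_of_continuousOn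
          ((hQc.comp (continuous_fst.prodMk (continuous_snd.add
            (continuous_const.mul continuous_fst)))).continuousOn)
        refine (intervalIntegral.hasDerivAt_integral_of_dominated_loc_of_deriv_le
          (ball_mem_nhds _ one_pos) (x₀ := ξ₀) (a := (0:ℝ)) (b := T) (μ := volume)
          (F := fun ξ t => δ t (ξ + c * t))
          (F' := fun ξ t => fderiv ℝ (fun p : ℝ × ℝ => δ p.1 p.2) (t, ξ + c * t) (0, 1))
          (bound := fun _ => M) ?_ ?_ ?_ ?_ ?_ ?_).2
        · filter_upwards with ξ
          exact (hδc.comp (hmaptfix ξ)).aestronglyMeasurable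
        · exact (hδc.comp (hmaptfix ξ₀)).intervalIntegrable _ _
        · exact (hQc.comp (hmaptfix ξ₀)).aestronglyMeasurable
        · filter_upwards with t ht
          intro ξ hξ
          have hξIcc : ξ ∈ Icc (ξ₀ - 1) (ξ₀ + 1) := by
            rw [mem_ball, Real.dist_eq] at hξ
            have := abs_lt.mp hξ
            constructor <;> linarith [this.1, this.2]
          exact hM (t, ξ) ⟨uIoc_subset_uIcc ht, hξIcc⟩
        · exact intervalIntegrable_const
        · filter_upwards with t _
          intro ξ _
          exact hasDerivAt_comp_curve hδ (hasDerivAt_const ξ t)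
            ((hasDerivAt_id ξ).add_const (c * t))
      have hhd : Differentiable ℝ h := fun ξ => (hh' ξ).differentiableAt
      have hderivh : deriv h = h1 := funext fun ξ => (hh' ξ).deriv
      have hhC1 : ContDiff ℝ 1 h :=
        contDiff_one_iff_deriv.mpr ⟨hhd, by rw [hderivh]; exact hh1c⟩
      have hhper : ∀ ξ, h (ξ + b) = h ξ := by
        intro ξ
        simp only [hhdef]
        apply intervalIntegral.integral_congr
        intro t _
        beta_reduce
        have e : ξ + b + c * t = (ξ + c * t) + b := by ring
        rw [e, hδpx]
      have hh1per : ∀ ξ, h1 (ξ + b) = h1 ξ := by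
        intro ξ
        simp only [hh1def]
        apply intervalIntegral.integral_congr
        intro t _
        beta_reduce
        have e : ξ + b + c * t = (ξ + c * t) + b := by ring
        rw [e, pd2_periodic_x hδ hδpx]
      have hhbarC1 : ContDiff ℝ 1 (fun p : ℝ × ℝ => h (p.2 - c * p.1)) :=
        hhC1.comp (contDiff_snd.sub (contDiff_const.mul contDiff_fst))
      have hzero : deriv (fun ε : ℝ =>
          Sact L T b fun t x => u t x + ε • h (x - c * t)) 0 = 0 := by
        refine hR (fun t x => h (x - c * t)) ?_ ?_ ?_ ?_
        · exact hhbarC1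
        · intro t x
          beta_reduce
          have e : x - c * (t + T) = (x - c * t) - b := by rw [mul_add, hcT]; ring
          rw [e]
          have e2 : x - c * t - b + b = x - c * t := by ring
          have := hhper (x - c * t - b)
          rw [e2] at this
          exact this.symm
        · intro t x
          beta_reduce
          have e : x + b - c * t = (x - c * t) + b := by ring
          rw [e]
          exact hhper _
        · intro s t x
          beta_reduce
          have e : x + c * s - c * (t + s) = x - c * t := by ring
          rw [e]
      -- partial derivatives of the averaged travelling wave
      have hbar1 : ∀ t x : ℝ, fderiv ℝ (fun p : ℝ × ℝ => h (p.2 - c * p.1)) (t, x) (1, 0)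
          = (-c) • h1 (x - c * t) := by
        intro t x
        refine (hasDerivAt_pd1 hhbarC1 t x).unique ?_
        have hg : HasDerivAt (fun τ : ℝ => x - c * τ) (-c) t := by
          exact ((hasDerivAt_const t x).sub ((hasDerivAt_id t).const_mul c)).congr_deriv (by ring)
        have h2 := HasDerivAt.scomp t (hh' (x - c * t)) hg
        simpa [Function.comp_def] using h2
      have hbar2 : ∀ t x : ℝ, fderiv ℝ (fun p : ℝ × ℝ => h (p.2 - c * p.1)) (t, x) (0, 1)
          = h1 (x - c * t) := by
        intro t x
        refine (hasDerivAt_pd2 hhbarC1 t x).unique ?_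
        have hg : HasDerivAt (fun y : ℝ => y - c * t) 1 x := by
          simpa using (hasDerivAt_id x).sub_const (c * t)
        have h2 := HasDerivAt.scomp x (hh' (x - c * t)) hg
        simpa [Function.comp_def] using h2
      set G : ℝ → ℝ := fun ξ => D ξ (h ξ, (-c) • h1 ξ, h1 ξ) with hGdef
      have hGper : Function.Periodic G b := by
        intro ξ
        simp only [hGdef, hDper, hhper, hh1per]
      have hAeq : deriv (fun ε : ℝ =>
          Sact L T b fun t x => u t x + ε • h (x - c * t)) 0
          = T • ∫ ξ in (0:ℝ)..b, G ξ := by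
        refine ((sact_hasDerivAt L hL T b u (fun t x => h (x - c * t))
          hu hhbarC1).deriv).trans ?_
        have hpt : ∀ t x : ℝ,
            fderiv ℝ (fun q : (Fin d → ℝ) × (Fin d → ℝ) × (Fin d → ℝ) => L q.1 q.2.1 q.2.2)
              (u t x, fderiv ℝ (fun p : ℝ × ℝ => u p.1 p.2) (t, x) (1, 0),
                fderiv ℝ (fun p : ℝ × ℝ => u p.1 p.2) (t, x) (0, 1))
              (h (x - c * t),
                fderiv ℝ (fun p : ℝ × ℝ => h (p.2 - c * p.1)) (t, x) (1, 0),
                fderiv ℝ (fun p : ℝ × ℝ => h (p.2 - c * p.1)) (t, x) (0, 1))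
            = G (x - c * t) := by
          intro t x
          rw [hVeq t x, hbar1 t x, hbar2 t x]
        have hin : ∀ t : ℝ, (∫ x in (0:ℝ)..b,
            fderiv ℝ (fun q : (Fin d → ℝ) × (Fin d → ℝ) × (Fin d → ℝ) => L q.1 q.2.1 q.2.2)
              (u t x, fderiv ℝ (fun p : ℝ × ℝ => u p.1 p.2) (t, x) (1, 0),
                fderiv ℝ (fun p : ℝ × ℝ => u p.1 p.2) (t, x) (0, 1))
              (h (x - c * t),
                fderiv ℝ (fun p : ℝ × ℝ => h (p.2 - c * p.1)) (t, x) (1, 0),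
                fderiv ℝ (fun p : ℝ × ℝ => h (p.2 - c * p.1)) (t, x) (0, 1)))
            = ∫ ξ in (0:ℝ)..b, G ξ := by
          intro t
          rw [intervalIntegral.integral_congr (fun x _ => hpt t x)]
          exact shift_periodic_integral hGper (c * t)
        rw [intervalIntegral.integral_congr (fun t _ => hin t),
          intervalIntegral.integral_const]
        simp
      have hGint : (∫ ξ in (0:ℝ)..b, G ξ) = 0 := by
        rw [hzero] at hAeq
        rcases smul_eq_zero.mp hAeq.symm with h' | h'
        · exact absurd h' hT
        · exact h'
      refine ((sact_hasDerivAt L hL T b u δ hu hδ).deriv).trans ?_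
      have hptδ : ∀ t x : ℝ,
          fderiv ℝ (fun q : (Fin d → ℝ) × (Fin d → ℝ) × (Fin d → ℝ) => L q.1 q.2.1 q.2.2)
            (u t x, fderiv ℝ (fun p : ℝ × ℝ => u p.1 p.2) (t, x) (1, 0),
              fderiv ℝ (fun p : ℝ × ℝ => u p.1 p.2) (t, x) (0, 1))
            (δ t x, fderiv ℝ (fun p : ℝ × ℝ => δ p.1 p.2) (t, x) (1, 0),
              fderiv ℝ (fun p : ℝ × ℝ => δ p.1 p.2) (t, x) (0, 1))
          = D (x - c * t) (δ t x, fderiv ℝ (fun p : ℝ × ℝ => δ p.1 p.2) (t, x) (1, 0),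
              fderiv ℝ (fun p : ℝ × ℝ => δ p.1 p.2) (t, x) (0, 1)) := by
        intro t x
        rw [hVeq t x]
      rw [intervalIntegral.integral_congr (fun t _ =>
        intervalIntegral.integral_congr (fun x _ => hptδ t x))]
      rw [key_swap hcT D hDc hDper δ hδ hδpt hδpx]
      refine (intervalIntegral.integral_congr fun ξ _ => ?_).trans hGint
      rfl
  · exact part2
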